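/- arXiv:2103.07952 — 13 statements merged into one kernel-verified Lean document; each statement's English description precedes it below -/
import Mathlib

section
/- If 4R·ω_g·T̃_m ≥ −V², then the set I_f is nonempty. -/
open Real

/-- If `4·R·ωg·T̃m ≥ −V²`, then the set `I_f` is nonempty. -/
theorem stmt_1
    (R L J m Dp V ωg ωn Tm : ℝ)
    (hR : 0 < R) (hL : 0 < L) (hJ : 0 < J) (hm : 0 < m) (hDp : 0 < Dp)
    (hV : 0 < V) (hωg : 0 < ωg) (hωn : 0 < ωn)
    (Tt p : ℝ)
    (hTt : Tt = Tm + Dp * (ωn - ωg)) (hp : p = R / L)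
    (Λ : ℝ → ℝ)
    (hΛ : ∀ i : ℝ, i ≠ 0 →
      Λ i = -(Tt / (m * i)) * (L * Real.sqrt (p ^ 2 + ωg ^ 2) / V)
            + m * i * ωg * p / (V * Real.sqrt (p ^ 2 + ωg ^ 2)))
    (If : Set ℝ) (hIf : If = {i : ℝ | 0 < i ∧ |Λ i| ≤ 1})
    (hmain : 4 * R * ωg * Tt ≥ -V ^ 2) :
    If.Nonempty := by
  have hp' : 0 < p := by rw [hp]; positivity
  have hsq : (0:ℝ) < p ^ 2 + ωg ^ 2 := by positivity
  set s := Real.sqrt (p ^ 2 + ωg ^ 2) with hs_def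
  have hs : 0 < s := Real.sqrt_pos.mpr hsq
  set A := Tt * L * s / (m * V) with hA
  set B := m * ωg * p / (V * s) with hB
  have hBpos : 0 < B := by rw [hB]; positivity
  have hLp : L * p = R := by rw [hp]; field_simp
  have hAB : A * B = R * ωg * Tt / V ^ 2 := by
    rw [hA, hB]
    field_simp
    linear_combination Tt * hLp
  have h1 : (0:ℝ) ≤ 1 + 4 * (A * B) := by
    have hV2 : (0:ℝ) < V ^ 2 := by positivity
    have hnum : 0 ≤ V ^ 2 + 4 * (R * ωg * Tt) := by nlinarith
    have heq : 1 + 4 * (R * ωg * Tt / V ^ 2) = (V ^ 2 + 4 * (R * ωg * Tt)) / V ^ 2 := by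
      field_simp
    rw [hAB, heq]
    exact div_nonneg hnum hV2.le
  have h1' : (0:ℝ) ≤ 1 + 4 * (A * B) := h1
  set D := Real.sqrt (1 + 4 * (A * B)) with hD_def
  have hD0 : 0 ≤ D := Real.sqrt_nonneg _
  have hD2 : D ^ 2 = 1 + 4 * (A * B) := Real.sq_sqrt h1
  set i₀ := (1 + D) / (2 * B) with hi0_def
  have hi0 : 0 < i₀ := by rw [hi0_def]; positivity
  have hkey : B * i₀ ^ 2 - A = i₀ := by
    rw [hi0_def]
    field_simp
    nlinarith [hD2]
  have hΛ1 : Λ i₀ = 1 := by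
    rw [hΛ i₀ hi0.ne']
    have hrw : -(Tt / (m * i₀)) * (L * s / V) + m * i₀ * ωg * p / (V * s)
        = B * i₀ - A / i₀ := by
      rw [hA, hB]
      field_simp
      ring
    rw [hrw]
    have : B * i₀ - A / i₀ = (B * i₀ ^ 2 - A) / i₀ := by
      field_simp
    rw [this, hkey, div_self hi0.ne']
  refine ⟨i₀, ?_⟩
  rw [hIf]
  exact ⟨hi0, by rw [hΛ1]; simp⟩
end

section
/- If T̃_m ≠ 0 and I_f is nonempty, then I_f is a nonempty closed bounded interval, i.e., I_f = [inf I_f, sup I_f]. If T̃_m = 0, then I_f is the half-open interval (0, V·√(p² + ω_g²)/(m·ω_g·p)]. -/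
open Real


lemma abs_form (A B w : ℝ) (hw : 0 < w) :
    |A / w + B * w| ≤ 1 ↔ |A + B * w ^ 2| ≤ w := by
  have h : A / w + B * w = (A + B * w ^ 2) / w := by field_simp
  rw [h, abs_div, abs_of_pos hw, div_le_one hw]

lemma aux_interval (A B : ℝ) (hA : A ≠ 0) (hB : 0 < B)
    (hne : {i : ℝ | 0 < i ∧ |A / i + B * i| ≤ 1}.Nonempty) :
    {i : ℝ | 0 < i ∧ |A / i + B * i| ≤ 1} =
      Set.Icc (sInf {i : ℝ | 0 < i ∧ |A / i + B * i| ≤ 1})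
        (sSup {i : ℝ | 0 < i ∧ |A / i + B * i| ≤ 1}) := by
  set S := {i : ℝ | 0 < i ∧ |A / i + B * i| ≤ 1} with hS
  have hmem : ∀ z : ℝ, z ∈ S ↔ 0 < z ∧ |A + B * z ^ 2| ≤ z := by
    intro z
    constructor
    · rintro ⟨hz, h⟩; exact ⟨hz, (abs_form A B z hz).1 h⟩
    · rintro ⟨hz, h⟩; exact ⟨hz, (abs_form A B z hz).2 h⟩
  set M : ℝ := max 1 ((1 + |A|) / B) with hM
  have hM1 : (1:ℝ) ≤ M := le_max_left _ _
  have hMpos : 0 < M := lt_of_lt_of_le one_pos hM1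
  have hub : ∀ z ∈ S, z ≤ M := by
    intro z hz
    obtain ⟨hz0, habs⟩ := (hmem z).1 hz
    have h1 : A + B * z ^ 2 ≤ z := (abs_le.1 habs).2
    by_cases h : z ≤ 1
    · exact h.trans hM1
    · push_neg at h
      have hAz : |A| ≤ z * |A| := by nlinarith [abs_nonneg A]
      have : z * B ≤ 1 + |A| := by nlinarith [neg_abs_le A]
      have : z ≤ (1 + |A|) / B := (le_div_iff₀ hB).2 this
      exact this.trans (le_max_right _ _)
  have hden : (0:ℝ) < 1 + B * M := by positivity
  set ε : ℝ := |A| / (1 + B * M) with hε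
  have hεpos : 0 < ε := div_pos (abs_pos.2 hA) hden
  have hlb : ∀ z ∈ S, ε ≤ z := by
    intro z hz
    obtain ⟨hz0, habs⟩ := (hmem z).1 hz
    obtain ⟨h1, h2⟩ := abs_le.1 habs
    have hzM : z ≤ M := hub z hz
    have hA1 : |A| ≤ z + B * z ^ 2 := by
      rcases abs_cases A with ⟨hc, _⟩ | ⟨hc, _⟩ <;> nlinarith [sq_nonneg z]
    have hA2 : |A| ≤ z * (1 + B * M) := by nlinarith [mul_nonneg hB.le hz0.le]
    exact (div_le_iff₀ hden).2 hA2
  have hbdd_above : BddAbove S := ⟨M, fun z hz => hub z hz⟩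
  have hbdd_below : BddBelow S := ⟨ε, fun z hz => hlb z hz⟩
  have hclosed : IsClosed S := by
    have heq : S = Set.Icc ε M ∩ {i : ℝ | |A + B * i ^ 2| ≤ i} := by
      ext z
      constructor
      · intro hz
        exact ⟨⟨hlb z hz, hub z hz⟩, ((hmem z).1 hz).2⟩
      · rintro ⟨⟨h1, h2⟩, h3⟩
        exact (hmem z).2 ⟨lt_of_lt_of_le hεpos h1, h3⟩
    rw [heq]
    exact isClosed_Icc.inter
      (isClosed_le (Continuous.abs (continuous_const.add (continuous_const.mul (continuous_pow 2)))) continuous_id)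
  have hconn : S.OrdConnected := by
    constructor
    intro x hx y hy z hz
    obtain ⟨hx0, hxa⟩ := (hmem x).1 hx
    obtain ⟨hy0, hya⟩ := (hmem y).1 hy
    obtain ⟨hxz, hzy⟩ := hz
    have hz0 : 0 < z := lt_of_lt_of_le hx0 hxz
    obtain ⟨hx1, hx2⟩ := abs_le.1 hxa
    obtain ⟨hy1, hy2⟩ := abs_le.1 hya
    refine (hmem z).2 ⟨hz0, abs_le.2 ⟨?_, ?_⟩⟩
    · nlinarith [mul_nonneg (sub_nonneg.2 hxz) (mul_nonneg hB.le (by positivity : (0:ℝ) ≤ z + x))]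
    · rcases eq_or_lt_of_le hxz with rfl | hxz'
      · linarith
      · have hxy : x < y := lt_of_lt_of_le hxz' hzy
        nlinarith [mul_nonneg (sub_nonneg.2 hzy) (sub_nonneg.2 hx2),
          mul_nonneg (sub_nonneg.2 hxz) (sub_nonneg.2 hy2),
          mul_nonneg (mul_nonneg (sub_nonneg.2 hxz) (sub_nonneg.2 hzy))
            (mul_nonneg (sub_nonneg.2 hxy.le) hB.le),
          sub_pos.2 hxy]
  have hinf : sInf S ∈ S := hclosed.csInf_mem hne hbdd_below
  have hsup : sSup S ∈ S := hclosed.csSup_mem hne hbdd_above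
  apply Set.Subset.antisymm
  · intro z hz
    exact ⟨csInf_le hbdd_below hz, le_csSup hbdd_above hz⟩
  · exact hconn.out hinf hsup

/-- If `T̃m ≠ 0` and `I_f` is nonempty, then `I_f` is a nonempty closed bounded
interval, i.e. `I_f = [inf I_f, sup I_f]`. If `T̃m = 0`, then
`I_f = (0, V·√(p² + ωg²)/(m·ωg·p)]`. -/
theorem stmt_2
    (R L J m Dp V ωg ωn Tm : ℝ)
    (hR : 0 < R) (hL : 0 < L) (hJ : 0 < J) (hm : 0 < m) (hDp : 0 < Dp)
    (hV : 0 < V) (hωg : 0 < ωg) (hωn : 0 < ωn)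
    (Tt p : ℝ)
    (hTt : Tt = Tm + Dp * (ωn - ωg)) (hp : p = R / L)
    (Λ : ℝ → ℝ)
    (hΛ : ∀ i : ℝ, i ≠ 0 →
      Λ i = -(Tt / (m * i)) * (L * Real.sqrt (p ^ 2 + ωg ^ 2) / V)
            + m * i * ωg * p / (V * Real.sqrt (p ^ 2 + ωg ^ 2)))
    (If : Set ℝ) (hIf : If = {i : ℝ | 0 < i ∧ |Λ i| ≤ 1}) :
    (Tt ≠ 0 → If.Nonempty → If = Set.Icc (sInf If) (sSup If)) ∧
    (Tt = 0 → If = Set.Ioc 0 (V * Real.sqrt (p ^ 2 + ωg ^ 2) / (m * ωg * p))) := by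
  have hppos : 0 < p := by rw [hp]; positivity
  set s : ℝ := Real.sqrt (p ^ 2 + ωg ^ 2) with hsdef
  have hs : 0 < s := Real.sqrt_pos.2 (by positivity)
  constructor
  · intro hTne hne
    have hform : ∀ i : ℝ, i ≠ 0 →
        Λ i = (-(Tt * L * s) / (m * V)) / i + ((m * ωg * p) / (V * s)) * i := by
      intro i hi
      rw [hΛ i hi]
      field_simp
    have hset : If = {i : ℝ | 0 < i ∧
        |(-(Tt * L * s) / (m * V)) / i + ((m * ωg * p) / (V * s)) * i| ≤ 1} := by
      rw [hIf]
      ext i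
      simp only [Set.mem_setOf_eq]
      constructor
      · rintro ⟨hi, h⟩; exact ⟨hi, by rwa [← hform i hi.ne']⟩
      · rintro ⟨hi, h⟩; exact ⟨hi, by rwa [hform i hi.ne']⟩
    rw [hset] at hne ⊢
    exact aux_interval _ _
      (by
        apply div_ne_zero _ (by positivity)
        simpa using mul_ne_zero (mul_ne_zero hTne hL.ne') hs.ne')
      (by positivity) hne
  · intro h0
    have hc : 0 < V * s / (m * ωg * p) := by positivity
    rw [hIf]
    ext i
    simp only [Set.mem_setOf_eq, Set.mem_Ioc]
    constructor
    · rintro ⟨hi, h⟩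
      refine ⟨hi, ?_⟩
      have hΛi : Λ i = m * i * ωg * p / (V * s) := by
        rw [hΛ i hi.ne', h0]; simp
      rw [hΛi, abs_of_pos (by positivity)] at h
      rw [div_le_one (by positivity)] at h
      rw [le_div_iff₀ (by positivity)]
      nlinarith
    · rintro ⟨hi, h⟩
      refine ⟨hi, ?_⟩
      have hΛi : Λ i = m * i * ωg * p / (V * s) := by
        rw [hΛ i hi.ne', h0]; simp
      rw [hΛi, abs_of_pos (by positivity), div_le_one (by positivity)]
      rw [le_div_iff₀ (by positivity)] at h
      nlinarith
end

section
/- Assume T̃_m > 0. Then Λ is strictly increasing on (0, ∞), the image {Λ(i_f) : i_f ∈ I_f} equals [−1, 1], and for every Λ₀ ∈ [−1, 1] the unique i_f > 0 with Λ(i_f) = Λ₀ is i_f = √(p² + ω_g²)·(Λ₀·V + √(Λ₀²·V² + 4·ω_g·R·T̃_m))/(2·m·ω_g·p). -/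
open Real

/-- If `T̃m > 0` then `Λ` is strictly increasing on `(0,∞)`, the image of `I_f`
under `Λ` is `[−1,1]`, and for every `Λ₀ ∈ [−1,1]` the unique `i_f > 0` with `Λ(i_f) = Λ₀` is
`i_f = √(p²+ωg²)·(Λ₀·V + √(Λ₀²·V² + 4·ωg·R·T̃m))/(2·m·ωg·p)`. -/
theorem stmt_3
    (R L J m Dp V ωg ωn Tm : ℝ)
    (hR : 0 < R) (hL : 0 < L) (hJ : 0 < J) (hm : 0 < m) (hDp : 0 < Dp)
    (hV : 0 < V) (hωg : 0 < ωg) (hωn : 0 < ωn)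
    (Tt p : ℝ)
    (hTt : Tt = Tm + Dp * (ωn - ωg)) (hp : p = R / L)
    (Λ : ℝ → ℝ)
    (hΛ : ∀ i : ℝ, i ≠ 0 →
      Λ i = -(Tt / (m * i)) * (L * Real.sqrt (p ^ 2 + ωg ^ 2) / V)
            + m * i * ωg * p / (V * Real.sqrt (p ^ 2 + ωg ^ 2)))
    (If : Set ℝ) (hIf : If = {i : ℝ | 0 < i ∧ |Λ i| ≤ 1})
    (hTtpos : 0 < Tt) :
    StrictMonoOn Λ (Set.Ioi 0) ∧
    Λ '' If = Set.Icc (-1) 1 ∧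
    (∀ Λ0 ∈ Set.Icc (-1 : ℝ) 1,
      0 < Real.sqrt (p ^ 2 + ωg ^ 2) *
            (Λ0 * V + Real.sqrt (Λ0 ^ 2 * V ^ 2 + 4 * ωg * R * Tt)) / (2 * m * ωg * p) ∧
      Λ (Real.sqrt (p ^ 2 + ωg ^ 2) *
            (Λ0 * V + Real.sqrt (Λ0 ^ 2 * V ^ 2 + 4 * ωg * R * Tt)) / (2 * m * ωg * p)) = Λ0 ∧
      ∀ i : ℝ, 0 < i → Λ i = Λ0 →
        i = Real.sqrt (p ^ 2 + ωg ^ 2) *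
              (Λ0 * V + Real.sqrt (Λ0 ^ 2 * V ^ 2 + 4 * ωg * R * Tt)) / (2 * m * ωg * p)) := by
  have hppos : 0 < p := by rw [hp]; positivity
  set s := Real.sqrt (p ^ 2 + ωg ^ 2) with hs
  have hspos : 0 < s := Real.sqrt_pos.mpr (by positivity)
  have hs2 : s ^ 2 = p ^ 2 + ωg ^ 2 := Real.sq_sqrt (by positivity)
  have hLp : L * p = R := by rw [hp]; field_simp
  -- strict monotonicity
  have hmono : StrictMonoOn Λ (Set.Ioi 0) := by
    intro x hx y hy hxy
    simp only [Set.mem_Ioi] at hx hy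
    rw [hΛ x (ne_of_gt hx), hΛ y (ne_of_gt hy)]
    have h1 : Tt / (m * y) < Tt / (m * x) :=
      div_lt_div_of_pos_left hTtpos (by positivity) (by nlinarith)
    have h2 : m * x * ωg * p / (V * s) < m * y * ωg * p / (V * s) := by
      apply div_lt_div_of_pos_right ?_ (by positivity)
      nlinarith [mul_pos (sub_pos.mpr hxy) (mul_pos (mul_pos hm hωg) hppos)]
    have h3 : 0 < L * s / V := by positivity
    nlinarith [mul_lt_mul_of_pos_right h1 h3]
  -- part 3 facts, for arbitrary Λ0 ∈ [-1,1]
  have key : ∀ Λ0 ∈ Set.Icc (-1 : ℝ) 1,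
      0 < s * (Λ0 * V + Real.sqrt (Λ0 ^ 2 * V ^ 2 + 4 * ωg * R * Tt)) / (2 * m * ωg * p) ∧
      Λ (s * (Λ0 * V + Real.sqrt (Λ0 ^ 2 * V ^ 2 + 4 * ωg * R * Tt)) / (2 * m * ωg * p)) = Λ0 ∧
      ∀ i : ℝ, 0 < i → Λ i = Λ0 →
        i = s * (Λ0 * V + Real.sqrt (Λ0 ^ 2 * V ^ 2 + 4 * ωg * R * Tt)) / (2 * m * ωg * p) := by
    intro Λ0 _
    set q := Real.sqrt (Λ0 ^ 2 * V ^ 2 + 4 * ωg * R * Tt) with hqdef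
    have hq2 : q ^ 2 = Λ0 ^ 2 * V ^ 2 + 4 * ωg * R * Tt := Real.sq_sqrt (by positivity)
    have hq0 : 0 ≤ q := Real.sqrt_nonneg _
    have hqgt : |Λ0 * V| < q := by
      have : |Λ0 * V| = Real.sqrt (Λ0 ^ 2 * V ^ 2) := by
        rw [show Λ0 ^ 2 * V ^ 2 = (Λ0 * V) ^ 2 by ring, Real.sqrt_sq_eq_abs]
      rw [this]
      apply Real.sqrt_lt_sqrt (by positivity)
      have : 0 < 4 * ωg * R * Tt := by positivity
      linarith
    have hnum : 0 < Λ0 * V + q := by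
      have := neg_abs_le (Λ0 * V)
      nlinarith [abs_nonneg (Λ0 * V)]
    have hipos : 0 < s * (Λ0 * V + q) / (2 * m * ωg * p) := by positivity
    refine ⟨hipos, ?_, ?_⟩
    · rw [hΛ _ (ne_of_gt hipos)]
      field_simp
      linear_combination hq2 - (4*Tt*ωg) * hLp
    · intro i hi hΛi
      have hΛi' : Λ (s * (Λ0 * V + q) / (2 * m * ωg * p)) = Λ0 := by
        rw [hΛ _ (ne_of_gt hipos)]
        field_simp
        linear_combination hq2 - (4*Tt*ωg) * hLp
      exact hmono.injOn (Set.mem_Ioi.mpr hi) (Set.mem_Ioi.mpr hipos) (by rw [hΛi, hΛi'])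
  refine ⟨hmono, ?_, key⟩
  ext y
  constructor
  · rintro ⟨i, hiIf, rfl⟩
    rw [hIf] at hiIf
    exact abs_le.mp hiIf.2
  · intro hy
    obtain ⟨hipos, heq, -⟩ := key y hy
    refine ⟨_, ?_, heq⟩
    rw [hIf]
    exact ⟨hipos, by rw [heq]; exact abs_le.mpr hy⟩
end

section
/- Assume T̃_m < 0. Then Λ(i_f) > 0 for all i_f > 0; there exists i* > 0 such that Λ is strictly decreasing on (0, i*] and strictly increasing on [i*, ∞); the image {Λ(i_f) : i_f ∈ I_f} is contained in (0, 1]; and for every Λ₀ ∈ {Λ(i_f) : i_f ∈ I_f} one has Λ₀²·V² + 4·ω_g·R·T̃_m ≥ 0 and both numbers √(p² + ω_g²)·(Λ₀·V + √(Λ₀²·V² + 4·ω_g·R·T̃_m))/(2·m·ω_g·p) and √(p² + ω_g²)·(Λ₀·V − √(Λ₀²·V² + 4·ω_g·R·T̃_m))/(2·m·ω_g·p) are positive and satisfy Λ(i_f) = Λ₀. -/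
open Real

set_option maxHeartbeats 1000000 in
/-- If `T̃m < 0` then `Λ(i_f) > 0` for all `i_f > 0`; there is `i* > 0` such that
`Λ` is strictly decreasing on `(0, i*]` and strictly increasing on `[i*, ∞)`; the image
`Λ '' I_f ⊆ (0,1]`; and for every `Λ₀` in this image, `Λ₀²·V² + 4·ωg·R·T̃m ≥ 0` and both
`√(p²+ωg²)·(Λ₀·V ± √(Λ₀²·V² + 4·ωg·R·T̃m))/(2·m·ωg·p)` are positive and are mapped by `Λ`
to `Λ₀`. -/
theorem stmt_4
    (R L J m Dp V ωg ωn Tm : ℝ)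
    (hR : 0 < R) (hL : 0 < L) (hJ : 0 < J) (hm : 0 < m) (hDp : 0 < Dp)
    (hV : 0 < V) (hωg : 0 < ωg) (hωn : 0 < ωn)
    (Tt p : ℝ)
    (hTt : Tt = Tm + Dp * (ωn - ωg)) (hp : p = R / L)
    (Λ : ℝ → ℝ)
    (hΛ : ∀ i : ℝ, i ≠ 0 →
      Λ i = -(Tt / (m * i)) * (L * Real.sqrt (p ^ 2 + ωg ^ 2) / V)
            + m * i * ωg * p / (V * Real.sqrt (p ^ 2 + ωg ^ 2)))
    (If : Set ℝ) (hIf : If = {i : ℝ | 0 < i ∧ |Λ i| ≤ 1})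
    (hTtneg : Tt < 0) :
    (∀ i : ℝ, 0 < i → 0 < Λ i) ∧
    (∃ istar : ℝ, 0 < istar ∧
      StrictAntiOn Λ (Set.Ioc 0 istar) ∧ StrictMonoOn Λ (Set.Ici istar)) ∧
    Λ '' If ⊆ Set.Ioc 0 1 ∧
    (∀ Λ0 ∈ Λ '' If,
      0 ≤ Λ0 ^ 2 * V ^ 2 + 4 * ωg * R * Tt ∧
      (0 < Real.sqrt (p ^ 2 + ωg ^ 2) *
            (Λ0 * V + Real.sqrt (Λ0 ^ 2 * V ^ 2 + 4 * ωg * R * Tt)) / (2 * m * ωg * p) ∧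
       Λ (Real.sqrt (p ^ 2 + ωg ^ 2) *
            (Λ0 * V + Real.sqrt (Λ0 ^ 2 * V ^ 2 + 4 * ωg * R * Tt)) / (2 * m * ωg * p)) = Λ0) ∧
      (0 < Real.sqrt (p ^ 2 + ωg ^ 2) *
            (Λ0 * V - Real.sqrt (Λ0 ^ 2 * V ^ 2 + 4 * ωg * R * Tt)) / (2 * m * ωg * p) ∧
       Λ (Real.sqrt (p ^ 2 + ωg ^ 2) *
            (Λ0 * V - Real.sqrt (Λ0 ^ 2 * V ^ 2 + 4 * ωg * R * Tt)) / (2 * m * ωg * p)) = Λ0)) := by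
  have hp0 : 0 < p := by rw [hp]; positivity
  set s : ℝ := Real.sqrt (p ^ 2 + ωg ^ 2) with hsdef
  have hs0 : 0 < s := Real.sqrt_pos.mpr (by positivity)
  have hs2 : s ^ 2 = p ^ 2 + ωg ^ 2 := Real.sq_sqrt (by positivity)
  have hLp : L * p = R := by rw [hp]; field_simp
  set A : ℝ := -Tt * L * s / (m * V) with hAdef
  set B : ℝ := m * ωg * p / (V * s) with hBdef
  have hA : 0 < A := by
    have : 0 < -Tt := by linarith
    rw [hAdef]; positivity
  have hB : 0 < B := by rw [hBdef]; positivity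
  have hform : ∀ i : ℝ, i ≠ 0 → Λ i = A / i + B * i := by
    intro i hi
    rw [hΛ i hi, hAdef, hBdef]
    field_simp
  have hpos : ∀ i : ℝ, 0 < i → 0 < Λ i := by
    intro i hi
    rw [hform i (ne_of_gt hi)]
    positivity
  clear_value A B
  have hABV : A * B * V ^ 2 = -(Tt * ωg * R) := by
    rw [hAdef, hBdef]
    field_simp
    linear_combination (-Tt) * hLp
  refine ⟨hpos, ?_, ?_, ?_⟩
  · refine ⟨Real.sqrt (A / B), Real.sqrt_pos.mpr (by positivity), ?_, ?_⟩
    · intro x hx y hy hxy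
      obtain ⟨hx0, hxle⟩ := hx
      obtain ⟨hy0, hyle⟩ := hy
      have hist2 : B * Real.sqrt (A / B) ^ 2 = A := by
        rw [Real.sq_sqrt (by positivity)]; field_simp
      have hist0 : 0 < Real.sqrt (A / B) := Real.sqrt_pos.mpr (by positivity)
      have hxy2 : B * (x * y) < A := by
        have h1 : x * y < Real.sqrt (A / B) * Real.sqrt (A / B) :=
          calc x * y < Real.sqrt (A / B) * y :=
                mul_lt_mul_of_pos_right (lt_of_lt_of_le hxy hyle) hy0
            _ ≤ Real.sqrt (A / B) * Real.sqrt (A / B) :=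
                mul_le_mul_of_nonneg_left hyle (le_of_lt hist0)
        nlinarith
      rw [hform x (ne_of_gt hx0), hform y (ne_of_gt hy0), ← sub_pos]
      have key : A / x + B * x - (A / y + B * y) = (y - x) * (A - B * (x * y)) / (x * y) := by
        field_simp; ring
      rw [key]
      exact div_pos (mul_pos (by linarith) (by linarith)) (by positivity)
    · intro x hx y hy hxy
      simp only [Set.mem_Ici] at hx hy
      have hist0 : 0 < Real.sqrt (A / B) := Real.sqrt_pos.mpr (by positivity)
      have hx0 : 0 < x := lt_of_lt_of_le hist0 hx
      have hy0 : 0 < y := lt_trans hx0 hxy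
      have hist2 : B * Real.sqrt (A / B) ^ 2 = A := by
        rw [Real.sq_sqrt (by positivity)]; field_simp
      have hxy2 : A < B * (x * y) := by
        have h1 : Real.sqrt (A / B) * Real.sqrt (A / B) < x * y :=
          calc Real.sqrt (A / B) * Real.sqrt (A / B) ≤ x * x :=
                mul_le_mul hx hx (le_of_lt hist0) (le_of_lt hx0)
            _ < x * y := mul_lt_mul_of_pos_left hxy hx0
        nlinarith
      rw [hform x (ne_of_gt hx0), hform y (ne_of_gt hy0), ← sub_pos]
      have key : A / y + B * y - (A / x + B * x) = (y - x) * (B * (x * y) - A) / (x * y) := by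
        field_simp; ring
      rw [key]
      exact div_pos (mul_pos (by linarith) (by linarith)) (by positivity)
  · rintro z ⟨i, hi, rfl⟩
    rw [hIf] at hi
    obtain ⟨hi0, hile⟩ := hi
    exact ⟨hpos i hi0, (abs_le.mp hile).2⟩
  · rintro Λ0 ⟨i0, hi0mem, rfl⟩
    rw [hIf] at hi0mem
    obtain ⟨hi00, _⟩ := hi0mem
    set Λ0 := Λ i0 with hΛ0def
    have hΛ0i : Λ0 * i0 = A + B * i0 ^ 2 := by
      rw [hΛ0def, hform i0 (ne_of_gt hi00)]
      field_simp
    have hΛ0pos : 0 < Λ0 := hpos i0 hi00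
    clear_value Λ0
    have hVs0 : (0:ℝ) < V := hV
    have h1 : (Λ0 * i0) ^ 2 - 4 * A * B * i0 ^ 2 = (A - B * i0 ^ 2) ^ 2 := by
      rw [hΛ0i]; ring
    have h2 : 0 ≤ Λ0 ^ 2 - 4 * A * B := by
      have hi2 : 0 < i0 ^ 2 := by positivity
      have h3 : 0 ≤ i0 ^ 2 * (Λ0 ^ 2 - 4 * A * B) := by
        have h4 : i0 ^ 2 * (Λ0 ^ 2 - 4 * A * B) = (A - B * i0 ^ 2) ^ 2 := by
          linear_combination h1
        rw [h4]; positivity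
      exact nonneg_of_mul_nonneg_right h3 hi2
    have hdisc : 0 ≤ Λ0 ^ 2 * V ^ 2 + 4 * ωg * R * Tt := by
      have heq : Λ0 ^ 2 * V ^ 2 + 4 * ωg * R * Tt = (Λ0 ^ 2 - 4 * A * B) * V ^ 2 := by
        linear_combination (4 : ℝ) * hABV
      rw [heq]
      exact mul_nonneg h2 (sq_nonneg V)
    set D : ℝ := Real.sqrt (Λ0 ^ 2 * V ^ 2 + 4 * ωg * R * Tt) with hDdef
    have hD2 : D ^ 2 = Λ0 ^ 2 * V ^ 2 + 4 * ωg * R * Tt := by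
      rw [hDdef]; exact Real.sq_sqrt hdisc
    have hD0 : 0 ≤ D := by rw [hDdef]; exact Real.sqrt_nonneg _
    clear_value D
    have hDlt : D < Λ0 * V := by
      have hneg : 4 * ωg * R * Tt < 0 :=
        mul_neg_of_pos_of_neg (by positivity) hTtneg
      nlinarith [hD2, hD0, hneg, mul_pos hΛ0pos hV]
    have hquad : ∀ r : ℝ, 0 < r → A + B * r ^ 2 = Λ0 * r → Λ r = Λ0 := by
      intro r hr hq
      rw [hform r (ne_of_gt hr)]
      field_simp
      linarith [hq]
    have hrplus : 0 < s * (Λ0 * V + D) / (2 * m * ωg * p) := by positivity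
    have hrminus : 0 < s * (Λ0 * V - D) / (2 * m * ωg * p) := by
      have : 0 < Λ0 * V - D := by linarith
      positivity
    have hqp : A + B * (s * (Λ0 * V + D) / (2 * m * ωg * p)) ^ 2 =
        Λ0 * (s * (Λ0 * V + D) / (2 * m * ωg * p)) := by
      rw [hAdef, hBdef]
      field_simp
      linear_combination hD2 + (-(4 * Tt * ωg)) * hLp
    have hqm : A + B * (s * (Λ0 * V - D) / (2 * m * ωg * p)) ^ 2 =
        Λ0 * (s * (Λ0 * V - D) / (2 * m * ωg * p)) := by
      rw [hAdef, hBdef]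
      field_simp
      linear_combination hD2 + (-(4 * Tt * ωg)) * hLp
    exact ⟨hdisc, ⟨hrplus, hquad _ hrplus hqp⟩, ⟨hrminus, hquad _ hrminus hqm⟩⟩
end

section
/- Assume 4R·ω_g·T̃_m ≥ −V² and let i_f ∈ I_f. For each j ∈ {1,2}, the determinant of the Jacobian matrix A_j of the vector field F at the equilibrium point x_jᵉ is strictly positive if and only if sin(δ_jᵉ + φ) > 0. -/
open Real


set_option maxHeartbeats 1600000 in
private lemma det_fin_four'' (M : Matrix (Fin 4) (Fin 4) ℝ) (h0 : M 3 0 = 0) (h1 : M 3 1 = 0)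
    (h2 : M 3 2 = 1) (h3 : M 3 3 = 0) :
    M.det = M 2 1 * (M 0 0 * M 1 3 - M 0 3 * M 1 0)
            - M 2 3 * (M 0 0 * M 1 1 - M 0 1 * M 1 0)
            + M 2 0 * (M 0 3 * M 1 1 - M 0 1 * M 1 3) := by
  have := Matrix.det_succ_row M 3
  simp [Fin.sum_univ_succ, Matrix.det_fin_three, h0, h1, h2, h3, Fin.succAbove,
    Matrix.submatrix] at this
  rw [this]; ring

set_option maxHeartbeats 1600000 in
/-- Assume `4R·ωg·T̃m ≥ −V²` and let `i_f ∈ I_f`. For each `j ∈ {1,2}`, the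
determinant of the Jacobian matrix `A_j` of the vector field `F` at the equilibrium point
`x_jᵉ` is strictly positive if and only if `sin(δ_jᵉ + φ) > 0`. -/
theorem stmt_5
    (R L J m Dp V ωg ωn Tm : ℝ)
    (hR : 0 < R) (hL : 0 < L) (hJ : 0 < J) (hm : 0 < m) (hDp : 0 < Dp)
    (hV : 0 < V) (hωg : 0 < ωg) (hωn : 0 < ωn)
    (Tt p φ : ℝ)
    (hTt : Tt = Tm + Dp * (ωn - ωg)) (hp : p = R / L)
    (hφ : φ ∈ Set.Ioo 0 (π / 2)) (hφtan : Real.tan φ = ωg * L / R)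
    (Λ : ℝ → ℝ)
    (hΛ : ∀ i : ℝ, i ≠ 0 →
      Λ i = -(Tt / (m * i)) * (L * Real.sqrt (p ^ 2 + ωg ^ 2) / V)
            + m * i * ωg * p / (V * Real.sqrt (p ^ 2 + ωg ^ 2)))
    (If : Set ℝ) (hIf : If = {i : ℝ | 0 < i ∧ |Λ i| ≤ 1})
    (hmain : 4 * R * ωg * Tt ≥ -V ^ 2)
    (i_f : ℝ) (hif : i_f ∈ If)
    (δ1 δ2 iqe : ℝ)
    (hδ1 : δ1 = Real.arccos (Λ i_f) - φ)
    (hδ2 : δ2 = -Real.arccos (Λ i_f) - φ)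
    (hiqe : iqe = -(Tt / (m * i_f)))
    (F : (Fin 4 → ℝ) → Fin 4 → ℝ)
    (hF : ∀ x : Fin 4 → ℝ, F x =
      ![(-R * x 0 + x 2 * L * x 1 + V * Real.sin (x 3)) / L,
        (-(x 2 * L * x 0) - R * x 1 - m * i_f * x 2 + V * Real.cos (x 3)) / L,
        (Tm + m * i_f * x 1 - Dp * x 2 + Dp * ωn) / J,
        x 2 - ωg]) :
    ∀ δe ∈ ({δ1, δ2} : Set ℝ), ∀ A : Matrix (Fin 4) (Fin 4) ℝ,
      HasFDerivAt F (LinearMap.toContinuousLinearMap (Matrix.mulVecLin A))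
        ![-(Tt * ωg / (m * i_f * p)) + V * Real.sin δe / R, iqe, ωg, δe] →
      (0 < A.det ↔ 0 < Real.sin (δe + φ)) := by
  intro δe _ A hA
  have hifpos : 0 < i_f := by
    rw [hIf] at hif; exact hif.1
  set a : ℝ := -(Tt * ωg / (m * i_f * p)) + V * Real.sin δe / R with ha
  set x₀ : Fin 4 → ℝ := ![a, iqe, ωg, δe] with hx₀
  -- the explicit Jacobian matrix
  set A₀ : Matrix (Fin 4) (Fin 4) ℝ :=
    !![-R / L, ωg, iqe, V * Real.cos δe / L;
       -ωg, -R / L, -a - m * i_f / L, -(V * Real.sin δe) / L;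
       0, m * i_f / J, -Dp / J, 0;
       0, 0, 1, 0] with hA₀
  have hx0 : x₀ 0 = a := rfl
  have hx1 : x₀ 1 = iqe := rfl
  have hx2 : x₀ 2 = ωg := rfl
  have hx3 : x₀ 3 = δe := rfl
  -- projections
  have hpr : ∀ k : Fin 4, HasFDerivAt (fun x : Fin 4 → ℝ => x k)
      ((ContinuousLinearMap.proj k : (Fin 4 → ℝ) →L[ℝ] ℝ)) x₀ :=
    fun k => by exact hasFDerivAt_apply k x₀
  have hFeq : F = fun x : Fin 4 → ℝ =>
      ![(-R * x 0 + x 2 * L * x 1 + V * Real.sin (x 3)) / L,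
        (-(x 2 * L * x 0) - R * x 1 - m * i_f * x 2 + V * Real.cos (x 3)) / L,
        (Tm + m * i_f * x 1 - Dp * x 2 + Dp * ωn) / J,
        x 2 - ωg] := funext hF
  have hsin : HasFDerivAt (fun x : Fin 4 → ℝ => Real.sin (x 3))
      (Real.cos δe • (ContinuousLinearMap.proj 3 : (Fin 4 → ℝ) →L[ℝ] ℝ)) x₀ := by
    have := (Real.hasDerivAt_sin (x₀ 3)).comp_hasFDerivAt x₀ (hpr 3)
    rwa [hx3] at this
  have hcos : HasFDerivAt (fun x : Fin 4 → ℝ => Real.cos (x 3))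
      ((-Real.sin δe) • (ContinuousLinearMap.proj 3 : (Fin 4 → ℝ) →L[ℝ] ℝ)) x₀ := by
    have := (Real.hasDerivAt_cos (x₀ 3)).comp_hasFDerivAt x₀ (hpr 3)
    rwa [hx3] at this
  have hder : HasFDerivAt F (LinearMap.toContinuousLinearMap (Matrix.mulVecLin A₀)) x₀ := by
    rw [hFeq]
    apply hasFDerivAt_pi''
    intro i
    fin_cases i
    · convert ((((hpr 0).const_mul (-R)).add (((hpr 2).mul_const L).mul (hpr 1))).add
        (hsin.const_mul V)).mul_const (1 / L) using 1
      · rfl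
      · funext x; simp; ring
      · ext v
        simp [Matrix.mulVecLin_apply, Matrix.mulVec, dotProduct, Fin.sum_univ_four, hA₀, hx₀,
          Matrix.vecHead, Matrix.vecTail, Function.comp]
        field_simp
        ring
    · convert (((((((hpr 2).mul_const L).mul (hpr 0)).neg).sub ((hpr 1).const_mul R)).sub
        ((hpr 2).const_mul (m * i_f))).add (hcos.const_mul V)).mul_const (1 / L) using 1
      · rfl
      · funext x; simp; ring
      · ext v
        simp [Matrix.mulVecLin_apply, Matrix.mulVec, dotProduct, Fin.sum_univ_four, hA₀, hx₀,
          Matrix.vecHead, Matrix.vecTail, Function.comp]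
        field_simp
        ring
    · convert ((((hasFDerivAt_const Tm x₀).add ((hpr 1).const_mul (m * i_f))).sub
        ((hpr 2).const_mul Dp)).add (hasFDerivAt_const (Dp * ωn) x₀)).mul_const (1 / J) using 1
      · rfl
      · funext x; simp; ring
      · ext v
        simp [Matrix.mulVecLin_apply, Matrix.mulVec, dotProduct, Fin.sum_univ_four, hA₀, hx₀,
          Matrix.vecHead, Matrix.vecTail, Function.comp]
        field_simp
        ring
    · convert (hpr 2).sub_const ωg using 1
      ext v
      simp [Matrix.mulVecLin_apply, Matrix.mulVec, dotProduct, Fin.sum_univ_four, hA₀, hx₀,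
          Matrix.vecHead, Matrix.vecTail, Function.comp]
      ext v
      simp [Matrix.mulVecLin_apply, Matrix.mulVec, dotProduct, Fin.sum_univ_four, hA₀, hx₀,
          Matrix.vecHead, Matrix.vecTail, Function.comp]
  -- uniqueness of the derivative gives A = A₀
  have hE := hA.unique hder
  have hlin : Matrix.mulVecLin A = Matrix.mulVecLin A₀ := by
    have := congrArg (fun T : (Fin 4 → ℝ) →L[ℝ] (Fin 4 → ℝ) =>
      (T : (Fin 4 → ℝ) →ₗ[ℝ] (Fin 4 → ℝ))) hE
    simpa using this
  have hAA : A = A₀ := by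
    ext i j
    have h := congrFun (congrArg (fun T : (Fin 4 → ℝ) →ₗ[ℝ] (Fin 4 → ℝ) =>
      T (Pi.single j 1)) hlin) i
    simpa [Matrix.mulVecLin_apply, Matrix.mulVec_single] using h
  -- determinant computation
  have hdet : A₀.det = m * i_f * V / (J * L ^ 2) *
      (R * Real.sin δe + ωg * L * Real.cos δe) := by
    rw [det_fin_four'' A₀ (by simp [hA₀, Matrix.vecHead, Matrix.vecTail]) (by simp [hA₀, Matrix.vecHead, Matrix.vecTail]) (by simp [hA₀, Matrix.vecHead, Matrix.vecTail]) (by simp [hA₀, Matrix.vecHead, Matrix.vecTail])]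
    simp [hA₀]
    field_simp
  have hc : 0 < m * i_f * V / (J * L ^ 2) := by positivity
  have h1 : 0 < A.det ↔ 0 < R * Real.sin δe + ωg * L * Real.cos δe := by
    rw [hAA, hdet]
    constructor
    · intro h; nlinarith
    · intro h; positivity
  -- relate to sin (δe + φ)
  have hcosφ : 0 < Real.cos φ := by
    apply Real.cos_pos_of_mem_Ioo
    constructor
    · have := Real.pi_pos; linarith [hφ.1]
    · exact hφ.2
  have hsinφ : Real.sin φ = ωg * L / R * Real.cos φ := by
    rw [← hφtan, Real.tan_eq_sin_div_cos]
    field_simp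
  have hsum : Real.sin (δe + φ) = Real.cos φ / R *
      (R * Real.sin δe + ωg * L * Real.cos δe) := by
    rw [Real.sin_add, hsinφ]
    field_simp
  have hc2 : 0 < Real.cos φ / R := by positivity
  rw [h1, hsum]
  constructor
  · intro h; positivity
  · intro h; nlinarith
end

section
/- Assume 4R·ω_g·T̃_m ≥ −V² and let i_f ∈ I_f. If for some j ∈ {1,2} every complex eigenvalue of the Jacobian matrix A_j of F at x_jᵉ has strictly negative real part, then sin(δ_jᵉ + φ) > 0; consequently δ_jᵉ = δ₁ᵉ and δ₁ᵉ ∈ (−φ, π − φ). -/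
set_option maxHeartbeats 1600000


open Real

/-- Assume `4R·ωg·T̃m ≥ −V²` and let `i_f ∈ I_f`. If for some `j ∈ {1,2}` every
complex eigenvalue of the Jacobian matrix `A_j` of `F` at `x_jᵉ` has strictly negative real
part, then `sin(δ_jᵉ + φ) > 0`; consequently `δ_jᵉ = δ₁ᵉ` and `δ₁ᵉ ∈ (−φ, π − φ)`. -/
theorem stmt_6
    (R L J m Dp V ωg ωn Tm : ℝ)
    (hR : 0 < R) (hL : 0 < L) (hJ : 0 < J) (hm : 0 < m) (hDp : 0 < Dp)
    (hV : 0 < V) (hωg : 0 < ωg) (hωn : 0 < ωn)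
    (Tt p φ : ℝ)
    (hTt : Tt = Tm + Dp * (ωn - ωg)) (hp : p = R / L)
    (hφ : φ ∈ Set.Ioo 0 (π / 2)) (hφtan : Real.tan φ = ωg * L / R)
    (Λ : ℝ → ℝ)
    (hΛ : ∀ i : ℝ, i ≠ 0 →
      Λ i = -(Tt / (m * i)) * (L * Real.sqrt (p ^ 2 + ωg ^ 2) / V)
            + m * i * ωg * p / (V * Real.sqrt (p ^ 2 + ωg ^ 2)))
    (If : Set ℝ) (hIf : If = {i : ℝ | 0 < i ∧ |Λ i| ≤ 1})
    (hmain : 4 * R * ωg * Tt ≥ -V ^ 2)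
    (i_f : ℝ) (hif : i_f ∈ If)
    (δ1 δ2 iqe : ℝ)
    (hδ1 : δ1 = Real.arccos (Λ i_f) - φ)
    (hδ2 : δ2 = -Real.arccos (Λ i_f) - φ)
    (hiqe : iqe = -(Tt / (m * i_f)))
    (F : (Fin 4 → ℝ) → Fin 4 → ℝ)
    (hF : ∀ x : Fin 4 → ℝ, F x =
      ![(-R * x 0 + x 2 * L * x 1 + V * Real.sin (x 3)) / L,
        (-(x 2 * L * x 0) - R * x 1 - m * i_f * x 2 + V * Real.cos (x 3)) / L,
        (Tm + m * i_f * x 1 - Dp * x 2 + Dp * ωn) / J,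
        x 2 - ωg]) :
    ∀ δe ∈ ({δ1, δ2} : Set ℝ), ∀ A : Matrix (Fin 4) (Fin 4) ℝ,
      HasFDerivAt F (LinearMap.toContinuousLinearMap (Matrix.mulVecLin A))
        ![-(Tt * ωg / (m * i_f * p)) + V * Real.sin δe / R, iqe, ωg, δe] →
      (∀ μ ∈ spectrum ℂ (A.map (Complex.ofReal ·)), μ.re < 0) →
      (0 < Real.sin (δe + φ) ∧ δe = δ1 ∧ δ1 ∈ Set.Ioo (-φ) (π - φ)) := by
  intro δe hδe A hdA hspec
  have hif' : 0 < i_f ∧ |Λ i_f| ≤ 1 := by rwa [hIf] at hif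
  obtain ⟨hif0, hΛ1⟩ := hif'
  have hL' : L ≠ 0 := ne_of_gt hL
  have hJ' : J ≠ 0 := ne_of_gt hJ
  have hR' : R ≠ 0 := ne_of_gt hR
  set d0 : ℝ := -(Tt * ωg / (m * i_f * p)) + V * Real.sin δe / R with hd0
  set A₀ : Matrix (Fin 4) (Fin 4) ℝ :=
    !![-(R/L), ωg, iqe, V * Real.cos δe / L;
       -ωg, -(R/L), (-(L * d0) - m * i_f)/L, -(V * Real.sin δe) / L;
       0, m * i_f / J, -(Dp / J), 0;
       0, 0, 1, 0] with hA₀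
  -- the four coordinate projections
  have h0 : HasFDerivAt (fun x : Fin 4 → ℝ => x 0)
      (ContinuousLinearMap.proj (R := ℝ) (φ := fun _ : Fin 4 => ℝ) 0) ![d0, iqe, ωg, δe] :=
    (ContinuousLinearMap.proj (R := ℝ) (φ := fun _ : Fin 4 => ℝ) 0).hasFDerivAt
  have h1 : HasFDerivAt (fun x : Fin 4 → ℝ => x 1)
      (ContinuousLinearMap.proj (R := ℝ) (φ := fun _ : Fin 4 => ℝ) 1) ![d0, iqe, ωg, δe] :=
    (ContinuousLinearMap.proj (R := ℝ) (φ := fun _ : Fin 4 => ℝ) 1).hasFDerivAt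
  have h2 : HasFDerivAt (fun x : Fin 4 → ℝ => x 2)
      (ContinuousLinearMap.proj (R := ℝ) (φ := fun _ : Fin 4 => ℝ) 2) ![d0, iqe, ωg, δe] :=
    (ContinuousLinearMap.proj (R := ℝ) (φ := fun _ : Fin 4 => ℝ) 2).hasFDerivAt
  have h3 : HasFDerivAt (fun x : Fin 4 → ℝ => x 3)
      (ContinuousLinearMap.proj (R := ℝ) (φ := fun _ : Fin 4 => ℝ) 3) ![d0, iqe, ωg, δe] :=
    (ContinuousLinearMap.proj (R := ℝ) (φ := fun _ : Fin 4 => ℝ) 3).hasFDerivAt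
  have e0 : (![d0, iqe, ωg, δe] : Fin 4 → ℝ) 0 = d0 := rfl
  have e1 : (![d0, iqe, ωg, δe] : Fin 4 → ℝ) 1 = iqe := rfl
  have e2 : (![d0, iqe, ωg, δe] : Fin 4 → ℝ) 2 = ωg := rfl
  have e3 : (![d0, iqe, ωg, δe] : Fin 4 → ℝ) 3 = δe := rfl
  have hFd : HasFDerivAt F (LinearMap.toContinuousLinearMap (Matrix.mulVecLin A₀))
      ![d0, iqe, ωg, δe] := by
    rw [funext hF]
    apply hasFDerivAt_pi''
    intro i
    fin_cases i
    · refine ((((h0.const_mul (-R)).add ((h2.mul_const L).mul h1)).add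
        (h3.sin.const_mul V)).mul_const L⁻¹).congr_fderiv ?_
      ext v
      simp [hA₀, e0, e1, e2, e3, Matrix.mulVecLin_apply, Matrix.mulVec, dotProduct,
        Fin.sum_univ_four, smul_eq_mul]
      field_simp
      ring
    · refine (((((((h2.mul_const L).mul h0).neg).sub (h1.const_mul R)).sub
        (h2.const_mul (m * i_f))).add (h3.cos.const_mul V)).mul_const L⁻¹).congr_fderiv ?_
      ext v
      simp [hA₀, e0, e1, e2, e3, Matrix.mulVecLin_apply, Matrix.mulVec, dotProduct,
        Fin.sum_univ_four, smul_eq_mul]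
      field_simp
      ring
    · refine (((((h1.const_mul (m * i_f)).const_add Tm).sub
        (h2.const_mul Dp)).add_const (Dp * ωn)).mul_const J⁻¹).congr_fderiv ?_
      ext v
      simp [hA₀, e0, e1, e2, e3, Matrix.mulVecLin_apply, Matrix.mulVec, dotProduct,
        Fin.sum_univ_four, smul_eq_mul]
      field_simp
      ring
    · refine (h2.sub_const ωg).congr_fderiv ?_
      ext v
      simp [hA₀, e0, e1, e2, e3, Matrix.mulVecLin_apply, Matrix.mulVec, dotProduct,
        Fin.sum_univ_four, smul_eq_mul]
  -- identify A with the explicit Jacobian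
  have hAA : A = A₀ := by
    have h2' : Matrix.mulVecLin A = Matrix.mulVecLin A₀ :=
      LinearMap.toContinuousLinearMap.injective (hdA.unique hFd)
    ext i j
    have h3' := congrFun (LinearMap.congr_fun h2' (Pi.single j 1)) i
    simpa [Matrix.mulVecLin_apply, Matrix.mulVec_single] using h3'
  subst hAA
  -- the characteristic polynomial
  set P : Polynomial ℝ := A₀.charpoly with hPdef
  set Mc : Matrix (Fin 4) (Fin 4) ℂ := A₀.map (Complex.ofReal ·) with hMc
  have hevalC : ∀ z : ℂ, (Mc.charpoly).eval z = (Matrix.diagonal (fun _ : Fin 4 => z) - Mc).det := by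
    intro z
    rw [Matrix.charpoly, ← Polynomial.coe_evalRingHom, RingHom.map_det]
    congr 1
    ext i j
    by_cases h : i = j
    · subst h
      simp [Matrix.charmatrix_apply_eq]
    · simp [Matrix.charmatrix_apply_ne _ _ _ h, Matrix.diagonal_apply_ne _ h]
  have hmapc : Mc.charpoly = P.map Complex.ofRealHom := by
    rw [hPdef, hMc]
    exact Matrix.charpoly_map A₀ Complex.ofRealHom
  have hne : ∀ r : ℝ, 0 ≤ r → P.eval r ≠ 0 := by
    intro r hr h0'
    have h1' : (Mc.charpoly).eval (r : ℂ) = 0 := by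
      rw [hmapc, Polynomial.eval_map]
      have heq2 : Polynomial.eval₂ Complex.ofRealHom ((r : ℝ) : ℂ) P
          = Complex.ofRealHom (P.eval r) := Polynomial.eval₂_at_apply _ r
      rw [heq2, h0', map_zero]
    have hz : (r : ℂ) ∈ spectrum ℂ Mc := by
      rw [spectrum.mem_iff]
      intro hu
      rw [Matrix.isUnit_iff_isUnit_det] at hu
      have hd : (algebraMap ℂ (Matrix (Fin 4) (Fin 4) ℂ) r - Mc).det = 0 := by
        rw [Matrix.algebraMap_eq_diagonal]
        show (Matrix.diagonal (fun _ : Fin 4 => (r : ℂ)) - Mc).det = 0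
        rw [← hevalC]
        exact h1'
      rw [hd] at hu
      exact (not_isUnit_zero : ¬ IsUnit (0 : ℂ)) hu
    have := hspec _ hz
    simp only [Complex.ofReal_re] at this
    linarith
  have hmonic : P.Monic := A₀.charpoly_monic
  have hdeg : P.natDegree = 4 := by
    rw [hPdef, Matrix.charpoly_natDegree_eq_dim]
    simp
  have hdegpos : 0 < P.degree := by
    rw [← Polynomial.natDegree_pos_iff_degree_pos, hdeg]
    norm_num
  have htend : Filter.Tendsto (fun x => P.eval x) Filter.atTop Filter.atTop :=
    Polynomial.tendsto_atTop_of_leadingCoeff_nonneg P hdegpos (by rw [hmonic.leadingCoeff]; norm_num)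
  obtain ⟨b, hb1, hb0⟩ :=
    (((htend.eventually_ge_atTop 1).and (Filter.eventually_ge_atTop (0 : ℝ))).exists)
  have h0pos : 0 < P.eval 0 := by
    rcases lt_trichotomy (P.eval 0) 0 with hneg | hz | hposs
    · exfalso
      have hsub := intermediate_value_Icc hb0 (P.continuous.continuousOn (s := Set.Icc 0 b))
      have h0mem : (0 : ℝ) ∈ Set.Icc (P.eval 0) (P.eval b) := ⟨le_of_lt hneg, by linarith⟩
      obtain ⟨c, hc, hc0⟩ := hsub h0mem
      exact hne c hc.1 hc0
    · exact absurd hz (hne 0 le_rfl)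
    · exact hposs
  have hdetP : A₀.det = P.eval 0 := by
    rw [Matrix.det_eq_sign_charpoly_coeff, Polynomial.coeff_zero_eq_eval_zero]
    norm_num [hPdef]
  have hdet : A₀.det = m * i_f * V / (J * L) * (R / L * Real.sin δe + ωg * Real.cos δe) := by
    rw [hA₀]
    simp [Matrix.det_succ_row_zero, Fin.sum_univ_succ, Fin.succAbove,
      show ((2 : Fin 3).castSucc : Fin 4) = 2 from rfl]
    field_simp
  have hpos : 0 < R / L * Real.sin δe + ωg * Real.cos δe := by
    have hfac : 0 < m * i_f * V / (J * L) := by positivity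
    have h9 : 0 < m * i_f * V / (J * L) * (R / L * Real.sin δe + ωg * Real.cos δe) := by
      rw [← hdet, hdetP]; exact h0pos
    by_contra hcon
    push_neg at hcon
    nlinarith
  have hcosφ : 0 < Real.cos φ := by
    apply Real.cos_pos_of_mem_Ioo
    constructor
    · have := Real.pi_pos; linarith [hφ.1]
    · exact hφ.2
  have hcosφ' : Real.cos φ ≠ 0 := ne_of_gt hcosφ
  have hsincos : Real.sin φ = ωg * L / R * Real.cos φ := by
    have := hφtan
    rw [Real.tan_eq_sin_div_cos] at this
    field_simp at this ⊢
    linarith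
  have hsinsum : 0 < Real.sin (δe + φ) := by
    have heq : Real.sin (δe + φ)
        = Real.cos φ * (L / R) * (R / L * Real.sin δe + ωg * Real.cos δe) := by
      rw [Real.sin_add, hsincos]
      field_simp
    rw [heq]
    exact mul_pos (mul_pos hcosφ (div_pos hL hR)) hpos
  have ha0 : 0 ≤ Real.arccos (Λ i_f) := Real.arccos_nonneg _
  have haπ : Real.arccos (Λ i_f) ≤ π := Real.arccos_le_pi _
  simp only [Set.mem_insert_iff, Set.mem_singleton_iff] at hδe
  rcases hδe with h | h
  · refine ⟨hsinsum, h, ?_⟩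
    have hδφ : δ1 + φ = Real.arccos (Λ i_f) := by rw [hδ1]; ring
    have hs1 : 0 < Real.sin (δ1 + φ) := by rw [← h]; exact hsinsum
    have hlt0 : (0 : ℝ) < Real.arccos (Λ i_f) := by
      rcases ha0.lt_or_eq with h' | h'
      · exact h'
      · exfalso
        rw [hδφ, ← h', Real.sin_zero] at hs1
        exact lt_irrefl 0 hs1
    have hltπ : Real.arccos (Λ i_f) < π := by
      rcases haπ.lt_or_eq with h' | h'
      · exact h'
      · exfalso
        rw [hδφ, h', Real.sin_pi] at hs1
        exact lt_irrefl 0 hs1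
    constructor
    · rw [hδ1]; linarith
    · rw [hδ1]; linarith
  · exfalso
    have : δe + φ = -(Real.arccos (Λ i_f)) := by rw [h, hδ2]; ring
    rw [this, Real.sin_neg] at hsinsum
    have := Real.sin_nonneg_of_nonneg_of_le_pi ha0 haπ
    linarith
end

section
/- At every equilibrium point of the fourth-order model (for any fixed i_f ∈ ℝ), the active and reactive powers P and Q satisfy T̃_m·ω_g = P + R·(P² + Q²)/V². -/
open Real

/-- At every equilibrium point of the fourth-order model (for any fixed `i_f`),
the active and reactive powers `P`, `Q` satisfy `T̃m·ωg = P + R·(P² + Q²)/V²`. -/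
theorem stmt_7
    (R L J m Dp V ωg ωn Tm : ℝ)
    (hR : 0 < R) (hL : 0 < L) (hJ : 0 < J) (hm : 0 < m) (hDp : 0 < Dp)
    (hV : 0 < V) (hωg : 0 < ωg) (hωn : 0 < ωn)
    (Tt : ℝ) (hTt : Tt = Tm + Dp * (ωn - ωg))
    (i_f i_d i_q ω δ : ℝ)
    (he1 : -R * i_d + ω * L * i_q + V * Real.sin δ = 0)
    (he2 : -(ω * L * i_d) - R * i_q - m * i_f * ω + V * Real.cos δ = 0)
    (he3 : Tm + m * i_f * i_q - Dp * ω + Dp * ωn = 0)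
    (he4 : ω - ωg = 0)
    (P Q : ℝ)
    (hP : P = -V * (i_d * Real.sin δ + i_q * Real.cos δ))
    (hQ : Q = V * (i_q * Real.sin δ - i_d * Real.cos δ)) :
    Tt * ωg = P + R * (P ^ 2 + Q ^ 2) / V ^ 2 := by
  have hs := Real.sin_sq_add_cos_sq δ
  have hPQ : P ^ 2 + Q ^ 2 = V ^ 2 * (i_d ^ 2 + i_q ^ 2) := by
    subst hP hQ
    linear_combination V ^ 2 * (i_d ^ 2 + i_q ^ 2) * hs
  rw [hPQ]
  have hV2 : V ^ 2 ≠ 0 := by positivity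
  rw [mul_comm (V^2), mul_div_assoc, mul_div_assoc, div_self hV2, mul_one]
  have hω : ω = ωg := by linarith
  subst hω hP hTt
  linear_combination i_d * he1 + i_q * he2 + ω * he3
end

section
/- At every equilibrium point (i_d, i_q, ω, δ) of the fourth-order model (for any fixed i_f ∈ ℝ), the identities m·i_f·ω_g·cos δ = R·P/V + ω_g·L·Q/V + V and m·i_f·ω_g·sin δ = ω_g·L·P/V − R·Q/V hold, where P and Q are the active and reactive powers at the equilibrium. In particular, if R·P + ω_g·L·Q + V² ≠ 0 then tan δ = (ω_g·L·P − R·Q)/(R·P + ω_g·L·Q + V²). -/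
open Real

/-- At every equilibrium point of the fourth-order model (for any fixed `i_f`),
`m·i_f·ωg·cos δ = R·P/V + ωg·L·Q/V + V` and `m·i_f·ωg·sin δ = ωg·L·P/V − R·Q/V`; in
particular, if `R·P + ωg·L·Q + V² ≠ 0` then
`tan δ = (ωg·L·P − R·Q)/(R·P + ωg·L·Q + V²)`. -/
theorem stmt_8
    (R L J m Dp V ωg ωn Tm : ℝ)
    (hR : 0 < R) (hL : 0 < L) (hJ : 0 < J) (hm : 0 < m) (hDp : 0 < Dp)
    (hV : 0 < V) (hωg : 0 < ωg) (hωn : 0 < ωn)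
    (Tt : ℝ) (hTt : Tt = Tm + Dp * (ωn - ωg))
    (i_f i_d i_q ω δ : ℝ)
    (he1 : -R * i_d + ω * L * i_q + V * Real.sin δ = 0)
    (he2 : -(ω * L * i_d) - R * i_q - m * i_f * ω + V * Real.cos δ = 0)
    (he3 : Tm + m * i_f * i_q - Dp * ω + Dp * ωn = 0)
    (he4 : ω - ωg = 0)
    (P Q : ℝ)
    (hP : P = -V * (i_d * Real.sin δ + i_q * Real.cos δ))
    (hQ : Q = V * (i_q * Real.sin δ - i_d * Real.cos δ)) :
    m * i_f * ωg * Real.cos δ = R * P / V + ωg * L * Q / V + V ∧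
    m * i_f * ωg * Real.sin δ = ωg * L * P / V - R * Q / V ∧
    (R * P + ωg * L * Q + V ^ 2 ≠ 0 →
      Real.tan δ = (ωg * L * P - R * Q) / (R * P + ωg * L * Q + V ^ 2)) := by

  have hω : ω = ωg := by linarith
  subst hω hP hQ
  have hpy : Real.sin δ ^ 2 + Real.cos δ ^ 2 = 1 := Real.sin_sq_add_cos_sq δ
  have hVne : V ≠ 0 := ne_of_gt hV
  have h1 : m * i_f * ω * Real.cos δ =
      R * (-V * (i_d * Real.sin δ + i_q * Real.cos δ)) / V +
      ω * L * (V * (i_q * Real.sin δ - i_d * Real.cos δ)) / V + V := by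
    field_simp
    linear_combination (-(Real.sin δ))*he1 + (-(Real.cos δ))*he2 + V*hpy
  have h2 : m * i_f * ω * Real.sin δ =
      ω * L * (-V * (i_d * Real.sin δ + i_q * Real.cos δ)) / V -
      R * (V * (i_q * Real.sin δ - i_d * Real.cos δ)) / V := by
    field_simp
    linear_combination (Real.cos δ)*he1 + (-(Real.sin δ))*he2
  refine ⟨h1, h2, fun hne => ?_⟩
  have hden : R * (-V * (i_d * Real.sin δ + i_q * Real.cos δ)) +
      ω * L * (V * (i_q * Real.sin δ - i_d * Real.cos δ)) + V ^ 2 =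
      V * (m * i_f * ω * Real.cos δ) := by
    rw [h1]; field_simp
  have hc : Real.cos δ ≠ 0 := by
    intro h0
    apply hne
    rw [hden, h0]; ring
  have hmi : m * i_f * ω ≠ 0 := by
    intro h0
    apply hne
    rw [hden, h0]; ring
  rw [Real.tan_eq_sin_div_cos, hden]
  have hnum : ω * L * (-V * (i_d * Real.sin δ + i_q * Real.cos δ)) -
      R * (V * (i_q * Real.sin δ - i_d * Real.cos δ)) =
      V * (m * i_f * ω * Real.sin δ) := by
    rw [h2]; field_simp
  rw [hnum]
  have hif : i_f ≠ 0 := by rintro rfl; simp at hmi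
  field_simp
end

section
/- Let Z = (R, ω_g·L), O = (0,0), M = −(V²/‖Z‖²)·Z, and C = (−V²/(2R), 0) in ℝ². Then ‖C − O‖ = ‖C − M‖ = V²/(2R), and the unsigned angle at vertex M between the points O and C equals φ, as does the unsigned angle at vertex O between the points C and M: ∠(O, M, C) = ∠(C, O, M) = φ. -/
open Real

private lemma es_norm_two (a b : ℝ) (x : EuclideanSpace ℝ (Fin 2))
    (h0 : x 0 = a) (h1 : x 1 = b) :
    ‖x‖ = Real.sqrt (a ^ 2 + b ^ 2) := by
  rw [EuclideanSpace.norm_eq]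
  simp [Fin.sum_univ_two, sq_abs, h0, h1]

private lemma es_inner_two (a b c d : ℝ) (x y : EuclideanSpace ℝ (Fin 2))
    (hx0 : x 0 = a) (hx1 : x 1 = b) (hy0 : y 0 = c) (hy1 : y 1 = d) :
    inner ℝ x y = a * c + b * d := by
  simp [PiLp.inner_apply, Fin.sum_univ_two, hx0, hx1, hy0, hy1]
  ring

/-- With `Z = (R, ωg·L)`, `O = (0,0)`, `M = −(V²/‖Z‖²)·Z` and
`C = (−V²/(2R), 0)` in `ℝ²`, we have `‖C − O‖ = ‖C − M‖ = V²/(2R)`, and the unsigned angles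
satisfy `∠(O, M, C) = ∠(C, O, M) = φ`. -/
theorem stmt_10
    (R L V ωg : ℝ)
    (hR : 0 < R) (hL : 0 < L) (hV : 0 < V) (hωg : 0 < ωg)
    (φ : ℝ) (hφ : φ ∈ Set.Ioo 0 (π / 2)) (hφtan : Real.tan φ = ωg * L / R)
    (Z O M C : EuclideanSpace ℝ (Fin 2))
    (hZ : Z = WithLp.toLp 2 ![R, ωg * L])
    (hO : O = WithLp.toLp 2 ![0, 0])
    (hM : M = -(V ^ 2 / ‖Z‖ ^ 2) • Z)
    (hC : C = WithLp.toLp 2 ![-(V ^ 2 / (2 * R)), 0]) :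
    dist C O = V ^ 2 / (2 * R) ∧
    dist C M = V ^ 2 / (2 * R) ∧
    EuclideanGeometry.angle O M C = φ ∧
    EuclideanGeometry.angle C O M = φ := by
  obtain ⟨hφ0, hφ2⟩ := hφ
  have hpi := Real.pi_pos
  set s : ℝ := ωg * L with hs_def
  have hs : 0 < s := mul_pos hωg hL
  have hden : 0 < R ^ 2 + s ^ 2 := by positivity
  set t : ℝ := Real.sqrt (R ^ 2 + s ^ 2) with ht_def
  have htpos : 0 < t := Real.sqrt_pos.mpr hden
  have ht2 : t ^ 2 = R ^ 2 + s ^ 2 := Real.sq_sqrt hden.le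
  -- cos φ = R / t
  have hφarctan : φ = Real.arctan (s / R) := by
    rw [← hφtan, Real.arctan_tan (by linarith) (by linarith)]
  have hcos : Real.cos φ = R / t := by
    rw [hφarctan, Real.cos_arctan]
    rw [show (1 : ℝ) + (s / R) ^ 2 = (R ^ 2 + s ^ 2) / R ^ 2 by field_simp]
    rw [Real.sqrt_div hden.le, Real.sqrt_sq hR.le]
    field_simp
    exact ht_def
  -- component values
  have hZ0 : Z 0 = R := by rw [hZ]; rfl
  have hZ1 : Z 1 = s := by rw [hZ]; rfl
  have hZn : ‖Z‖ = t := es_norm_two R s Z hZ0 hZ1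
  set k : ℝ := V ^ 2 / (R ^ 2 + s ^ 2) with hk_def
  have hk : 0 < k := by positivity
  have hkt : k * (R ^ 2 + s ^ 2) = V ^ 2 := by rw [hk_def]; field_simp
  set c : ℝ := V ^ 2 / (2 * R) with hc_def
  have hcpos : 0 < c := by positivity
  have hcR : c * (2 * R) = V ^ 2 := by rw [hc_def]; field_simp
  have hM0 : M 0 = -(k * R) := by
    rw [hM, hZn]; show -(V ^ 2 / t ^ 2) * Z 0 = _; rw [hZ0, ht2]; ring
  have hM1 : M 1 = -(k * s) := by
    rw [hM, hZn]; show -(V ^ 2 / t ^ 2) * Z 1 = _; rw [hZ1, ht2]; ring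
  have hO0 : O 0 = 0 := by rw [hO]; rfl
  have hO1 : O 1 = 0 := by rw [hO]; rfl
  have hC0 : C 0 = -c := by rw [hC]; rfl
  have hC1 : C 1 = 0 := by rw [hC]; rfl
  -- vector components
  have hCO0 : (C - O) 0 = -c := by show C 0 - O 0 = -c; rw [hC0, hO0]; ring
  have hCO1 : (C - O) 1 = 0 := by show C 1 - O 1 = 0; rw [hC1, hO1]; ring
  have hCM0 : (C - M) 0 = k * R - c := by show C 0 - M 0 = _; rw [hC0, hM0]; ring
  have hCM1 : (C - M) 1 = k * s := by show C 1 - M 1 = _; rw [hC1, hM1]; ring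
  have hOM0 : (O - M) 0 = k * R := by show O 0 - M 0 = _; rw [hO0, hM0]; ring
  have hOM1 : (O - M) 1 = k * s := by show O 1 - M 1 = _; rw [hO1, hM1]; ring
  have hMO0 : (M - O) 0 = -(k * R) := by show M 0 - O 0 = _; rw [hO0, hM0]; ring
  have hMO1 : (M - O) 1 = -(k * s) := by show M 1 - O 1 = _; rw [hO1, hM1]; ring
  -- norms
  have hnCO : ‖C - O‖ = c := by
    rw [es_norm_two _ _ _ hCO0 hCO1]
    rw [show (-c) ^ 2 + (0:ℝ) ^ 2 = c ^ 2 by ring, Real.sqrt_sq hcpos.le]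
  have hnCM : ‖C - M‖ = c := by
    rw [es_norm_two _ _ _ hCM0 hCM1]
    rw [show (k * R - c) ^ 2 + (k * s) ^ 2 = c ^ 2 by
      linear_combination k * hkt - k * hcR]
    exact Real.sqrt_sq hcpos.le
  have hnOM : ‖O - M‖ = k * t := by
    rw [es_norm_two _ _ _ hOM0 hOM1]
    rw [show (k * R) ^ 2 + (k * s) ^ 2 = (k * t) ^ 2 by rw [mul_pow k t, ht2]; ring]
    exact Real.sqrt_sq (by positivity)
  have hnMO : ‖M - O‖ = k * t := by
    rw [es_norm_two _ _ _ hMO0 hMO1]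
    rw [show (-(k * R)) ^ 2 + (-(k * s)) ^ 2 = (k * t) ^ 2 by rw [mul_pow k t, ht2]; ring]
    exact Real.sqrt_sq (by positivity)
  -- inner products
  have hiOMC : inner ℝ (O - M) (C - M) = k * V ^ 2 / 2 := by
    rw [es_inner_two _ _ _ _ _ _ hOM0 hOM1 hCM0 hCM1]
    linear_combination k * hkt - (k / 2) * hcR
  have hiCOM : inner ℝ (C - O) (M - O) = k * V ^ 2 / 2 := by
    rw [es_inner_two _ _ _ _ _ _ hCO0 hCO1 hMO0 hMO1]
    rw [← hcR]; ring
  -- quotient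
  have hquot : k * V ^ 2 / 2 / (k * t * c) = R / t := by
    rw [← hcR]
    field_simp
  refine ⟨by rw [dist_eq_norm, hnCO], by rw [dist_eq_norm, hnCM], ?_, ?_⟩
  · rw [EuclideanGeometry.angle, InnerProductGeometry.angle]
    rw [show (O -ᵥ M) = O - M from rfl, show (C -ᵥ M) = C - M from rfl]
    rw [hiOMC, hnOM, hnCM, hquot, ← hcos]
    exact Real.arccos_cos hφ0.le (by linarith)
  · rw [EuclideanGeometry.angle, InnerProductGeometry.angle]
    rw [show (C -ᵥ O) = C - O from rfl, show (M -ᵥ O) = M - O from rfl]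
    rw [hiCOM, hnCO, hnMO]
    rw [show c * (k * t) = k * t * c by ring, hquot, ← hcos]
    exact Real.arccos_cos hφ0.le (by linarith)
end

section
/- Assume 4R·ω_g·T̃_m ≥ −V². For every i_f ∈ I_f and every j ∈ {1,2}: S_j(i_f) − M = (V·m·i_f·ω_g/‖Z‖)·(cos(φ − δ_jᵉ), sin(φ − δ_jᵉ)), where Z = (R, ω_g·L) and M = −(V²/‖Z‖²)·Z; in particular ‖S_j(i_f) − M‖ = V·m·i_f·ω_g/‖Z‖. -/
open Real

set_option maxHeartbeats 1000000

/-- Assume `4R·ωg·T̃m ≥ −V²`. For every `i_f ∈ I_f` and `j ∈ {1,2}`: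
`S_j(i_f) − M = (V·m·i_f·ωg/‖Z‖)·(cos(φ − δ_jᵉ), sin(φ − δ_jᵉ))`, where `Z = (R, ωg·L)` and
`M = −(V²/‖Z‖²)·Z`; in particular `‖S_j(i_f) − M‖ = V·m·i_f·ωg/‖Z‖`. -/
theorem stmt_11
    (R L J m Dp V ωg ωn Tm : ℝ)
    (hR : 0 < R) (hL : 0 < L) (hJ : 0 < J) (hm : 0 < m) (hDp : 0 < Dp)
    (hV : 0 < V) (hωg : 0 < ωg) (hωn : 0 < ωn)
    (Tt p φ : ℝ)
    (hTt : Tt = Tm + Dp * (ωn - ωg)) (hp : p = R / L)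
    (hφ : φ ∈ Set.Ioo 0 (π / 2)) (hφtan : Real.tan φ = ωg * L / R)
    (Λ : ℝ → ℝ)
    (hΛ : ∀ i : ℝ, i ≠ 0 →
      Λ i = -(Tt / (m * i)) * (L * Real.sqrt (p ^ 2 + ωg ^ 2) / V)
            + m * i * ωg * p / (V * Real.sqrt (p ^ 2 + ωg ^ 2)))
    (If : Set ℝ) (hIf : If = {i : ℝ | 0 < i ∧ |Λ i| ≤ 1})
    (hmain : 4 * R * ωg * Tt ≥ -V ^ 2)
    (i_f : ℝ) (hif : i_f ∈ If)
    (δ1 δ2 iqe : ℝ)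
    (hδ1 : δ1 = Real.arccos (Λ i_f) - φ)
    (hδ2 : δ2 = -Real.arccos (Λ i_f) - φ)
    (hiqe : iqe = -(Tt / (m * i_f)))
    (ide Pe Qe : ℝ → ℝ)
    (hide : ∀ δe : ℝ, ide δe = -(Tt * ωg / (m * i_f * p)) + V * Real.sin δe / R)
    (hPe : ∀ δe : ℝ, Pe δe = -V * (ide δe * Real.sin δe + iqe * Real.cos δe))
    (hQe : ∀ δe : ℝ, Qe δe = V * (iqe * Real.sin δe - ide δe * Real.cos δe))
    (Z M : EuclideanSpace ℝ (Fin 2))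
    (hZ : Z = ![R, ωg * L])
    (hM : M = -(V ^ 2 / ‖Z‖ ^ 2) • Z)
    (Se W : ℝ → EuclideanSpace ℝ (Fin 2))
    (hSe : ∀ δe : ℝ, Se δe = ![Pe δe, Qe δe])
    (hW : ∀ δe : ℝ, W δe = ![Real.cos (φ - δe), Real.sin (φ - δe)]) :
    ∀ δe ∈ ({δ1, δ2} : Set ℝ),
      Se δe - M = (V * m * i_f * ωg / ‖Z‖) • W δe ∧
      ‖Se δe - M‖ = V * m * i_f * ωg / ‖Z‖ := by
  obtain ⟨hif0, hΛle⟩ : 0 < i_f ∧ |Λ i_f| ≤ 1 := by rw [hIf] at hif; exact hif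
  set s : ℝ := Real.sqrt (R ^ 2 + (ωg * L) ^ 2) with hs_def
  have hs2 : s ^ 2 = R ^ 2 + (ωg * L) ^ 2 := by
    rw [hs_def, Real.sq_sqrt]; positivity
  have hs0 : 0 < s := by rw [hs_def]; positivity
  have hden : R ^ 2 + (ωg * L) ^ 2 ≠ 0 := by positivity
  have hZn : ‖Z‖ = s := by
    rw [EuclideanSpace.norm_eq]
    simp [hZ, Fin.sum_univ_two, Real.norm_eq_abs, sq_abs]
    exact hs_def.symm
  -- cos φ and sin φ
  have hcφ0 : 0 < Real.cos φ := Real.cos_pos_of_mem_Ioo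
    ⟨by linarith [hφ.1, Real.pi_pos], hφ.2⟩
  have hsφ0 : 0 < Real.sin φ := Real.sin_pos_of_pos_of_lt_pi hφ.1
    (by linarith [hφ.2, Real.pi_pos])
  have htan : Real.sin φ * R = ωg * L * Real.cos φ := by
    have h := hφtan
    rw [Real.tan_eq_sin_div_cos] at h
    field_simp at h
    linarith
  have hpyth := Real.sin_sq_add_cos_sq φ
  have hcφ : Real.cos φ * s = R := by
    have h1 : (Real.cos φ * s) ^ 2 = R ^ 2 := by
      have h2 : (Real.cos φ) ^ 2 * (R ^ 2 + (ωg * L) ^ 2)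
          = R ^ 2 * ((Real.sin φ) ^ 2 + (Real.cos φ) ^ 2) := by
        linear_combination (-(Real.sin φ * R + ωg * L * Real.cos φ)) * htan
      rw [hpyth, mul_one] at h2
      rw [mul_pow, hs2, h2]
    have h2 : 0 < Real.cos φ * s := by positivity
    nlinarith [h1, h2]
  have hsφ : Real.sin φ * s = ωg * L := by
    have h3 : Real.sin φ * s * R = ωg * L * R := by
      have : Real.sin φ * R * s = ωg * L * (Real.cos φ * s) := by
        rw [htan]; ring
      rw [hcφ] at this
      linarith [this]
    have hR' : R ≠ 0 := hR.ne'
    exact mul_right_cancel₀ hR' h3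
  -- Λ value
  have hq0 : 0 < Real.sqrt (p ^ 2 + ωg ^ 2) := by
    apply Real.sqrt_pos.2
    have : 0 < p := by rw [hp]; positivity
    positivity
  have hLq : L * Real.sqrt (p ^ 2 + ωg ^ 2) = s := by
    rw [hs_def, show R ^ 2 + (ωg * L) ^ 2 = L ^ 2 * (p ^ 2 + ωg ^ 2) by
      rw [hp]; field_simp]
    rw [Real.sqrt_mul (sq_nonneg L), Real.sqrt_sq hL.le]
  have hΛv : Λ i_f * (m * i_f * V * s) = -(Tt * s ^ 2) + m ^ 2 * i_f ^ 2 * ωg * R := by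
    rw [hΛ i_f hif0.ne']
    have hq : Real.sqrt (p ^ 2 + ωg ^ 2) = s / L := by
      field_simp [← hLq]
      rw [mul_comm]; exact hLq
    rw [hq, hp]
    field_simp
  -- main computation for any δe with cos (δe + φ) = Λ i_f
  have key : ∀ δe : ℝ, Real.cos (δe + φ) = Λ i_f →
      Se δe - M = (V * m * i_f * ωg / ‖Z‖) • W δe ∧
      ‖Se δe - M‖ = V * m * i_f * ωg / ‖Z‖ := by
    intro δe hcos
    set cδ := Real.cos δe with hcδ
    set sδ := Real.sin δe with hsδ
    have hpy : sδ ^ 2 + cδ ^ 2 = 1 := Real.sin_sq_add_cos_sq δe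
    have hexp : Real.cos (δe + φ) * s = cδ * R - sδ * (ωg * L) := by
      rw [Real.cos_add, ← hcφ, ← hsφ]; ring
    -- Tt value
    have hTv : Tt = (m ^ 2 * i_f ^ 2 * ωg * R - m * i_f * V * (cδ * R - sδ * (ωg * L)))
        / (R ^ 2 + (ωg * L) ^ 2) := by
      have h1 : Λ i_f * (m * i_f * V * s) = (cδ * R - sδ * (ωg * L)) * (m * i_f * V) := by
        rw [← hcos, ← hexp]; ring
      have h2 : Tt * s ^ 2 = m ^ 2 * i_f ^ 2 * ωg * R - m * i_f * V * (cδ * R - sδ * (ωg * L)) := by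
        linarith [hΛv, h1]
      rw [hs2] at h2
      field_simp [h2]
      linear_combination h2
    have hRne : R ≠ 0 := hR.ne'
    have hLne : L ≠ 0 := hL.ne'
    have hmne : m ≠ 0 := hm.ne'
    have hine : i_f ≠ 0 := hif0.ne'
    -- scalar identities (denominator-free in s)
    have hPid : Pe δe - (-(V ^ 2 / (R ^ 2 + (ωg * L) ^ 2)) * R)
        = V * m * i_f * ωg * (R * cδ + ωg * L * sδ) / (R ^ 2 + (ωg * L) ^ 2) := by
      rw [hPe, hide, hiqe, ← hcδ, ← hsδ, hp, hTv]
      field_simp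
      ring_nf
      linear_combination (-(V * R ^ 2)) * hpy
    have hQid : Qe δe - (-(V ^ 2 / (R ^ 2 + (ωg * L) ^ 2)) * (ωg * L))
        = V * m * i_f * ωg * (ωg * L * cδ - R * sδ) / (R ^ 2 + (ωg * L) ^ 2) := by
      rw [hQe, hide, hiqe, ← hcδ, ← hsδ, hp, hTv]
      field_simp
      ring_nf
      linear_combination (-(V * R * ωg * L)) * hpy
    -- trig values
    have hcosφδ : Real.cos (φ - δe) = (R * cδ + ωg * L * sδ) / s := by
      have : Real.cos (φ - δe) * s = R * cδ + ωg * L * sδ := by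
        rw [Real.cos_sub, ← hcφ, ← hsφ, ← hcδ, ← hsδ]; ring
      field_simp [← this]
      linarith [this]
    have hsinφδ : Real.sin (φ - δe) = (ωg * L * cδ - R * sδ) / s := by
      have : Real.sin (φ - δe) * s = ωg * L * cδ - R * sδ := by
        rw [Real.sin_sub, ← hcφ, ← hsφ, ← hcδ, ← hsδ]; ring
      field_simp [← this]
      linarith [this]
    have hsne : s ≠ 0 := hs0.ne'
    -- component equations
    have hc1 : Pe δe - (-(V ^ 2 / s ^ 2) * R)
        = (V * m * i_f * ωg / s) * Real.cos (φ - δe) := by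
      rw [hs2, hcosφδ, hPid]
      rw [div_mul_div_comm, ← sq, hs2]
    have hc2 : Qe δe - (-(V ^ 2 / s ^ 2) * (ωg * L))
        = (V * m * i_f * ωg / s) * Real.sin (φ - δe) := by
      rw [hs2, hsinφδ, hQid]
      rw [div_mul_div_comm, ← sq, hs2]
    have hveq : Se δe - M = (V * m * i_f * ωg / ‖Z‖) • W δe := by
      rw [hM, hZn]
      ext j
      fin_cases j
      · simpa [hSe, hW, hZ] using hc1
      · simpa [hSe, hW, hZ] using hc2
    refine ⟨hveq, ?_⟩
    rw [hveq, norm_smul]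
    have hWn : ‖W δe‖ = 1 := by
      rw [EuclideanSpace.norm_eq]
      simp [hW, Fin.sum_univ_two, Real.norm_eq_abs, sq_abs]
    rw [hWn, mul_one, Real.norm_eq_abs, abs_of_nonneg]
    rw [hZn]; positivity
  -- apply to δ1 and δ2
  intro δe hδe
  have habs := abs_le.1 hΛle
  rcases hδe with h | h
  · exact key δe (by rw [h, hδ1, sub_add_cancel, Real.cos_arccos habs.1 habs.2])
  · rw [Set.mem_singleton_iff] at h
    exact key δe (by rw [h, hδ2, sub_add_cancel, Real.cos_neg, Real.cos_arccos habs.1 habs.2])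
end

section
/- (i) If the fifth-order non-saturated model has an equilibrium point, then 4R²·Q̃² ≤ V⁴ + 4R·V²·T̃_m·ω_g. (ii) At every equilibrium point (i_d, i_q, ω, δ, i_f) of the fifth-order model: ω = ω_g, −m·i_f·i_q = T̃_m, the reactive power satisfies Q = Q̃, and the active power P satisfies T̃_m·ω_g = P + R·(P² + Q̃²)/V². -/
open Real

/-- (i) If the fifth-order non-saturated model has an equilibrium point, then
`4R²·Q̃² ≤ V⁴ + 4R·V²·T̃m·ωg`. (ii) At every equilibrium point `(i_d, i_q, ω, δ, i_f)`:
`ω = ωg`, `−m·i_f·i_q = T̃m`, the reactive power satisfies `Q = Q̃`, and the active power `P`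
satisfies `T̃m·ωg = P + R·(P² + Q̃²)/V²`. -/
theorem stmt_15
    (R L J m Dp Dq V ωg ωn vset K Tm Qset : ℝ)
    (hR : 0 < R) (hL : 0 < L) (hJ : 0 < J) (hm : 0 < m) (hDp : 0 < Dp) (hDq : 0 < Dq)
    (hV : 0 < V) (hωg : 0 < ωg) (hωn : 0 < ωn) (hvset : 0 < vset) (hK : 0 < K)
    (Tt Qt k : ℝ)
    (hTt : Tt = Tm + Dp * (ωn - ωg))
    (hQt : Qt = Qset + Dq * (vset - Real.sqrt (2 / 3) * V))
    (hk : k = Real.sqrt (3 / 2) * V / K)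
    (eqm : ℝ × ℝ × ℝ × ℝ × ℝ → Prop)
    (heqm : ∀ i_d i_q ω δ i_f : ℝ, eqm (i_d, i_q, ω, δ, i_f) ↔
      (-R * i_d + ω * L * i_q + V * Real.sin δ = 0 ∧
       -(ω * L * i_d) - R * i_q - m * i_f * ω + V * Real.cos δ = 0 ∧
       Tm + m * i_f * i_q - Dp * ω + Dp * ωn = 0 ∧
       ω - ωg = 0 ∧
       k * i_d * Real.cos δ - k * i_q * Real.sin δ + k / V * Qt = 0)) :
    ((∃ z : ℝ × ℝ × ℝ × ℝ × ℝ, eqm z) →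
      4 * R ^ 2 * Qt ^ 2 ≤ V ^ 4 + 4 * R * V ^ 2 * Tt * ωg) ∧
    (∀ i_d i_q ω δ i_f : ℝ, eqm (i_d, i_q, ω, δ, i_f) →
      ω = ωg ∧
      -(m * i_f * i_q) = Tt ∧
      V * (i_q * Real.sin δ - i_d * Real.cos δ) = Qt ∧
      Tt * ωg = -V * (i_d * Real.sin δ + i_q * Real.cos δ)
        + R * ((-V * (i_d * Real.sin δ + i_q * Real.cos δ)) ^ 2 + Qt ^ 2) / V ^ 2) := by
  have hkpos : 0 < k := by
    rw [hk]
    exact div_pos (mul_pos (Real.sqrt_pos.mpr (by norm_num)) hV) hK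
  have hVne : V ≠ 0 := ne_of_gt hV
  have key : ∀ i_d i_q ω δ i_f : ℝ, eqm (i_d, i_q, ω, δ, i_f) →
      ω = ωg ∧
      -(m * i_f * i_q) = Tt ∧
      V * (i_q * Real.sin δ - i_d * Real.cos δ) = Qt ∧
      Tt * ωg = -V * (i_d * Real.sin δ + i_q * Real.cos δ)
        + R * ((-V * (i_d * Real.sin δ + i_q * Real.cos δ)) ^ 2 + Qt ^ 2) / V ^ 2 := by
    intro i_d i_q ω δ i_f hz
    rw [heqm] at hz
    obtain ⟨e1, e2, e3, e4, e5⟩ := hz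
    have hω : ω = ωg := by linarith
    have hT : -(m * i_f * i_q) = Tt := by rw [hTt]; linear_combination -e3 - Dp * e4
    have e5' : i_d * Real.cos δ - i_q * Real.sin δ + Qt / V = 0 := by
      have h : k * (i_d * Real.cos δ - i_q * Real.sin δ + Qt / V) = 0 := by
        linear_combination e5
      rcases mul_eq_zero.mp h with h | h
      · exact absurd h (ne_of_gt hkpos)
      · exact h
    have hQ : V * (i_q * Real.sin δ - i_d * Real.cos δ) = Qt := by
      have h := congrArg (fun x => x * V) e5'
      simp only [zero_mul] at h
      field_simp at h
      linarith
    have h1 : (-R * i_d + ω * L * i_q + V * Real.sin δ) * i_d = 0 := by rw [e1]; ring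
    have h2 : (-(ω * L * i_d) - R * i_q - m * i_f * ω + V * Real.cos δ) * i_q = 0 := by
      rw [e2]; ring
    have hP : -V * (i_d * Real.sin δ + i_q * Real.cos δ)
        = -R * (i_d ^ 2 + i_q ^ 2) + Tt * ωg := by
      linear_combination -h1 - h2 + ω * hT + Tt * e4
    have hPQ : (-V * (i_d * Real.sin δ + i_q * Real.cos δ)) ^ 2 + Qt ^ 2
        = V ^ 2 * (i_d ^ 2 + i_q ^ 2) := by
      rw [← hQ]
      linear_combination (V ^ 2 * (i_d ^ 2 + i_q ^ 2)) * (Real.sin_sq_add_cos_sq δ)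
    refine ⟨hω, hT, hQ, ?_⟩
    rw [hPQ, hP]
    field_simp
    ring
  refine ⟨?_, key⟩
  rintro ⟨⟨i_d, i_q, ω, δ, i_f⟩, hz⟩
  obtain ⟨hω, hT, hQ, hrel⟩ := key i_d i_q ω δ i_f hz
  set P := -V * (i_d * Real.sin δ + i_q * Real.cos δ) with hPdef
  have hV2 : (V:ℝ) ^ 2 ≠ 0 := by positivity
  have h : (Tt * ωg - P) * V ^ 2 = R * (P ^ 2 + Qt ^ 2) := by
    rw [hrel]; field_simp; ring
  have key2 : V ^ 4 + 4 * R * V ^ 2 * (Tt * ωg) - 4 * R ^ 2 * Qt ^ 2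
      = (V ^ 2 + 2 * R * P) ^ 2 := by linear_combination 4 * R * h
  nlinarith [sq_nonneg (V ^ 2 + 2 * R * P), key2]
end

section
/- If z = (i_d, i_q, ω, δ, i_f) is an equilibrium point of the fifth-order non-saturated model, then z̃ = (−i_d, −i_q, ω, δ + π, −i_f) is also an equilibrium point, and the active power and the reactive power at z̃ are equal to those at z. -/
open Real

/-- If `z = (i_d, i_q, ω, δ, i_f)` is an equilibrium point of the fifth-order
non-saturated model, then `z̃ = (−i_d, −i_q, ω, δ + π, −i_f)` is also an equilibrium point,
and the active and reactive powers at `z̃` equal those at `z`. -/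
theorem stmt_17
    (R L J m Dp Dq V ωg ωn vset K Tm Qset : ℝ)
    (hR : 0 < R) (hL : 0 < L) (hJ : 0 < J) (hm : 0 < m) (hDp : 0 < Dp) (hDq : 0 < Dq)
    (hV : 0 < V) (hωg : 0 < ωg) (hωn : 0 < ωn) (hvset : 0 < vset) (hK : 0 < K)
    (Tt Qt k : ℝ)
    (hTt : Tt = Tm + Dp * (ωn - ωg))
    (hQt : Qt = Qset + Dq * (vset - Real.sqrt (2 / 3) * V))
    (hk : k = Real.sqrt (3 / 2) * V / K)
    (i_d i_q ω δ i_f : ℝ)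
    (he1 : -R * i_d + ω * L * i_q + V * Real.sin δ = 0)
    (he2 : -(ω * L * i_d) - R * i_q - m * i_f * ω + V * Real.cos δ = 0)
    (he3 : Tm + m * i_f * i_q - Dp * ω + Dp * ωn = 0)
    (he4 : ω - ωg = 0)
    (he5 : k * i_d * Real.cos δ - k * i_q * Real.sin δ + k / V * Qt = 0) :
    (-R * -i_d + ω * L * -i_q + V * Real.sin (δ + π) = 0 ∧
     -(ω * L * -i_d) - R * -i_q - m * -i_f * ω + V * Real.cos (δ + π) = 0 ∧
     Tm + m * -i_f * -i_q - Dp * ω + Dp * ωn = 0 ∧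
     ω - ωg = 0 ∧
     k * -i_d * Real.cos (δ + π) - k * -i_q * Real.sin (δ + π) + k / V * Qt = 0) ∧
    -V * (-i_d * Real.sin (δ + π) + -i_q * Real.cos (δ + π))
      = -V * (i_d * Real.sin δ + i_q * Real.cos δ) ∧
    V * (-i_q * Real.sin (δ + π) - -i_d * Real.cos (δ + π))
      = V * (i_q * Real.sin δ - i_d * Real.cos δ) := by
  simp only [Real.sin_add_pi, Real.cos_add_pi]
  refine ⟨⟨by linarith, by linarith, by linarith, he4, by linarith⟩, by ring, by ring⟩
end

section
/- Assume T̃_m = 0 and Q̃ = −V²·ω_g·L/(R² + ω_g²·L²), and set P_M = −V²·R/(R² + ω_g²·L²). Then for every δ ∈ ℝ, the point (i_d, i_q, ω_g, δ, 0) with i_q = −(cos δ·P_M − sin δ·Q̃)/V and i_d = −(sin δ·P_M + cos δ·Q̃)/V is an equilibrium point of the fifth-order non-saturated model; in particular the model then has infinitely many equilibrium points, all with field current i_f = 0. -/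
open Real

/-- Assume `T̃m = 0` and `Q̃ = −V²·ωg·L/(R² + ωg²·L²)`, and set
`P_M = −V²·R/(R² + ωg²·L²)`. Then for every `δ ∈ ℝ`, the point `(i_d, i_q, ωg, δ, 0)` with
`i_q = −(cos δ·P_M − sin δ·Q̃)/V` and `i_d = −(sin δ·P_M + cos δ·Q̃)/V` is an equilibrium
point of the fifth-order non-saturated model; in particular the model then has infinitely
many equilibrium points, all with field current `i_f = 0`. -/
theorem stmt_18
    (R L J m Dp Dq V ωg ωn vset K Tm Qset : ℝ)
    (hR : 0 < R) (hL : 0 < L) (hJ : 0 < J) (hm : 0 < m) (hDp : 0 < Dp) (hDq : 0 < Dq)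
    (hV : 0 < V) (hωg : 0 < ωg) (hωn : 0 < ωn) (hvset : 0 < vset) (hK : 0 < K)
    (Tt Qt k : ℝ)
    (hTt : Tt = Tm + Dp * (ωn - ωg))
    (hQt : Qt = Qset + Dq * (vset - Real.sqrt (2 / 3) * V))
    (hk : k = Real.sqrt (3 / 2) * V / K)
    (eqm : ℝ × ℝ × ℝ × ℝ × ℝ → Prop)
    (heqm : ∀ i_d i_q ω δ i_f : ℝ, eqm (i_d, i_q, ω, δ, i_f) ↔
      (-R * i_d + ω * L * i_q + V * Real.sin δ = 0 ∧
       -(ω * L * i_d) - R * i_q - m * i_f * ω + V * Real.cos δ = 0 ∧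
       Tm + m * i_f * i_q - Dp * ω + Dp * ωn = 0 ∧
       ω - ωg = 0 ∧
       k * i_d * Real.cos δ - k * i_q * Real.sin δ + k / V * Qt = 0))
    (hTt0 : Tt = 0)
    (hQtval : Qt = -(V ^ 2 * ωg * L / (R ^ 2 + ωg ^ 2 * L ^ 2)))
    (PM : ℝ) (hPM : PM = -(V ^ 2 * R / (R ^ 2 + ωg ^ 2 * L ^ 2))) :
    (∀ δ : ℝ, eqm
      (-((Real.sin δ * PM + Real.cos δ * Qt) / V),
       -((Real.cos δ * PM - Real.sin δ * Qt) / V), ωg, δ, 0)) ∧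
    {z : ℝ × ℝ × ℝ × ℝ × ℝ | eqm z ∧ z.2.2.2.2 = 0}.Infinite := by
  have hD : R ^ 2 + ωg ^ 2 * L ^ 2 > 0 := by positivity
  have hD' : R ^ 2 + ωg ^ 2 * L ^ 2 ≠ 0 := ne_of_gt hD
  have hV' : V ≠ 0 := ne_of_gt hV
  have hmem : ∀ δ : ℝ, eqm
      (-((Real.sin δ * PM + Real.cos δ * Qt) / V),
       -((Real.cos δ * PM - Real.sin δ * Qt) / V), ωg, δ, 0) := by
    intro δ
    have hsc : Real.sin δ ^ 2 + Real.cos δ ^ 2 = 1 := Real.sin_sq_add_cos_sq δ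
    rw [heqm]
    refine ⟨?_, ?_, ?_, by ring, ?_⟩
    · rw [hPM, hQtval]; field_simp; ring
    · rw [hPM, hQtval]; field_simp; ring
    · have : Tm + Dp * (ωn - ωg) = 0 := by rw [← hTt, hTt0]
      nlinarith [this]
    · field_simp
      linear_combination (-(k * Qt)) * hsc
  refine ⟨hmem, ?_⟩
  apply Set.infinite_of_injective_forall_mem
    (f := fun δ : ℝ => ((-((Real.sin δ * PM + Real.cos δ * Qt) / V),
       -((Real.cos δ * PM - Real.sin δ * Qt) / V), ωg, δ, 0) : ℝ × ℝ × ℝ × ℝ × ℝ))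
  case hi =>
    intro a b hab
    simpa using congrArg (fun z : ℝ × ℝ × ℝ × ℝ × ℝ => z.2.2.2.1) hab
  case hf =>
    intro δ
    exact ⟨hmem δ, rfl⟩
end
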